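/- Fix x ∈ ℝ^d and let f(W, w) = wᵀ σ.(Wᵀ x) for W ∈ ℝ^{d×m} and w ∈ ℝ^m, where σ : ℝ → ℝ is twice continuously differentiable and is applied entrywise, with 0 ≤ σ''(t) ≤ α for all t ∈ ℝ. If ‖x‖₂² ≤ r₁ and ‖w‖₁ ≤ r₂, then the trace of the Hessian of f with respect to the joint variable (W, w) ∈ ℝ^{dm + m} satisfies tr(∇² f(W, w)) ≤ α r₁ r₂. (Indeed ∂²f/∂w² = 0 and tr(∂²f/∂W²) = ‖x‖₂² Σ_{i=1}^m σ''((Wᵀx)_i) w_i.) -/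

import Mathlib

open scoped BigOperators

lemma second_dir {E : Type*} [NormedAddCommGroup E] [NormedSpace ℝ E]
    (G : E → ℝ) (hG : ContDiff ℝ 2 G) (p v : E) :
    iteratedFDeriv ℝ 2 G p ![v, v] = fderiv ℝ (fun q => fderiv ℝ G q v) p v := by
  have hdiff : DifferentiableAt ℝ (fderiv ℝ G) p :=
    ((hG.fderiv_right (m := 1) (by norm_num)).differentiable (by norm_num)) p
  rw [iteratedFDeriv_two_apply,
    fderiv_clm_apply (c := fderiv ℝ G) (u := fun _ => v) hdiff (differentiableAt_const v)]
  simp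

theorem stmt_2 (d m : ℕ) (x : Fin d → ℝ)
    (σ : ℝ → ℝ) (hσ : ContDiff ℝ 2 σ)
    (a r₁ r₂ : ℝ)
    (hσ'' : ∀ t, 0 ≤ deriv (deriv σ) t ∧ deriv (deriv σ) t ≤ a)
    (F : (Fin d → Fin m → ℝ) × (Fin m → ℝ) → ℝ)
    (hF : ∀ (W : Fin d → Fin m → ℝ) (w : Fin m → ℝ),
      F (W, w) = ∑ i, w i * σ (∑ j, W j i * x j))
    (hx : ∑ j, x j ^ 2 ≤ r₁)
    (W : Fin d → Fin m → ℝ) (w : Fin m → ℝ)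
    (hw : ∑ i, |w i| ≤ r₂) :
    (∑ j, ∑ i, iteratedFDeriv ℝ 2 F (W, w)
        ![(Pi.single j (Pi.single i 1), 0), (Pi.single j (Pi.single i 1), 0)]) +
      (∑ i, iteratedFDeriv ℝ 2 F (W, w)
        ![((0 : Fin d → Fin m → ℝ), Pi.single i 1), ((0 : Fin d → Fin m → ℝ), Pi.single i 1)])
      ≤ a * r₁ * r₂ := by
  classical
  have hσ1 : Differentiable ℝ σ := hσ.differentiable (by norm_num)
  have hσ' : ContDiff ℝ 1 (deriv σ) := by
    have h2 : ContDiff ℝ ((1 : ℕ) + 1) σ := by exact_mod_cast hσ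
    exact (contDiff_succ_iff_deriv.mp h2).2.2
  have hσ2 : Differentiable ℝ (deriv σ) := hσ'.differentiable (by norm_num)
  -- linear functionals
  set ℓ : Fin m → ((Fin d → Fin m → ℝ) × (Fin m → ℝ)) →L[ℝ] ℝ := fun i =>
    ∑ j, x j • ((ContinuousLinearMap.proj i).comp
      ((ContinuousLinearMap.proj j).comp
        (ContinuousLinearMap.fst ℝ (Fin d → Fin m → ℝ) (Fin m → ℝ)))) with hℓ
  set Pw : Fin m → ((Fin d → Fin m → ℝ) × (Fin m → ℝ)) →L[ℝ] ℝ := fun i =>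
    (ContinuousLinearMap.proj i).comp
      (ContinuousLinearMap.snd ℝ (Fin d → Fin m → ℝ) (Fin m → ℝ)) with hPw
  have hℓ_apply : ∀ i q, ℓ i q = ∑ j, x j * q.1 j i := by
    intro i q
    simp [hℓ]
  have hPw_apply : ∀ i q, Pw i q = q.2 i := fun i q => rfl
  set G : ((Fin d → Fin m → ℝ) × (Fin m → ℝ)) → ℝ :=
    fun q => ∑ i, q.2 i * σ (ℓ i q) with hG
  have hFG : F = G := by
    funext q
    rw [hG]
    have := hF q.1 q.2
    simp only [Prod.mk.eta] at this
    rw [this]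
    congr 1
    funext i
    rw [hℓ_apply]
    congr 2
    exact Finset.sum_congr rfl (fun j _ => mul_comm _ _)
  have hGsmooth : ContDiff ℝ 2 G := by
    apply ContDiff.sum
    intro i _
    exact ((Pw i).contDiff).mul (hσ.comp (ℓ i).contDiff)
  -- first derivative of G
  have hD : ∀ p, HasFDerivAt G
      (∑ i, (p.2 i • (deriv σ (ℓ i p) • ℓ i) + σ (ℓ i p) • Pw i)) p := by
    intro p
    apply HasFDerivAt.fun_sum
    intro i _
    have h1 : HasFDerivAt (fun q : (Fin d → Fin m → ℝ) × (Fin m → ℝ) => q.2 i)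
        (Pw i) p := (Pw i).hasFDerivAt
    have h2 : HasFDerivAt (fun q : (Fin d → Fin m → ℝ) × (Fin m → ℝ) => σ (ℓ i q))
        (deriv σ (ℓ i p) • ℓ i) p :=
      ((hσ1 (ℓ i p)).hasDerivAt).comp_hasFDerivAt p (ℓ i).hasFDerivAt
    exact h1.mul h2
  have hfderivG : ∀ p, fderiv ℝ G p =
      ∑ i, (p.2 i • (deriv σ (ℓ i p) • ℓ i) + σ (ℓ i p) • Pw i) :=
    fun p => (hD p).fderiv
  set p : (Fin d → Fin m → ℝ) × (Fin m → ℝ) := (W, w) with hp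
  -- W-directions
  have keyW : ∀ (j : Fin d) (i : Fin m),
      iteratedFDeriv ℝ 2 G p
        ![(Pi.single j (Pi.single i 1), 0), (Pi.single j (Pi.single i 1), 0)]
      = w i * deriv (deriv σ) (ℓ i p) * (x j * x j) := by
    intro j i
    set v : (Fin d → Fin m → ℝ) × (Fin m → ℝ) := (Pi.single j (Pi.single i 1), 0) with hv
    have hℓv : ∀ i', ℓ i' v = if i' = i then x j else 0 := by
      intro i'
      rw [hℓ_apply]
      rcases eq_or_ne i' i with h | h
      · subst h
        simp [hv, ite_apply, Pi.single_apply, Finset.sum_ite_eq']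
      · simp [hv, ite_apply, Pi.single_apply, h]
    have hPwv : ∀ i', Pw i' v = 0 := by
      intro i'; rw [hPw_apply]; simp [hv]
    have hfv : ∀ q, fderiv ℝ G q v = q.2 i * (deriv σ (ℓ i q) * x j) := by
      intro q
      rw [hfderivG q]
      simp only [ContinuousLinearMap.sum_apply, ContinuousLinearMap.add_apply,
        ContinuousLinearMap.smul_apply, smul_eq_mul]
      rw [Finset.sum_eq_single i]
      · rw [hℓv, hPwv]; simp
      · intro i' _ h; rw [hℓv, hPwv]; simp [h]
      · intro h; exact absurd (Finset.mem_univ i) h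
    rw [second_dir G hGsmooth p v]
    have hg : HasFDerivAt (fun q : (Fin d → Fin m → ℝ) × (Fin m → ℝ) =>
        q.2 i * (deriv σ (ℓ i q) * x j))
        (p.2 i • ((x j) • (deriv (deriv σ) (ℓ i p) • ℓ i)) +
          (deriv σ (ℓ i p) * x j) • Pw i) p := by
      have h2 : HasFDerivAt (fun q : (Fin d → Fin m → ℝ) × (Fin m → ℝ) =>
          deriv σ (ℓ i q) * x j) ((x j) • (deriv (deriv σ) (ℓ i p) • ℓ i)) p := by
        have := (((hσ2 (ℓ i p)).hasDerivAt).comp_hasFDerivAt p (ℓ i).hasFDerivAt).mul_const (x j)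
        exact this
      exact ((Pw i).hasFDerivAt).mul h2
    have : fderiv ℝ (fun q => fderiv ℝ G q v) p =
        (p.2 i • ((x j) • (deriv (deriv σ) (ℓ i p) • ℓ i)) +
          (deriv σ (ℓ i p) * x j) • Pw i) := by
      have hg' := hg.congr_of_eventuallyEq (Filter.Eventually.of_forall
        (fun q => hfv q))
      exact hg'.fderiv
    rw [this]
    simp only [ContinuousLinearMap.add_apply, ContinuousLinearMap.smul_apply, smul_eq_mul]
    rw [hℓv, hPwv]
    simp [hp]
    ring
  -- w-directions
  have keyw : ∀ (i : Fin m),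
      iteratedFDeriv ℝ 2 G p
        ![((0 : Fin d → Fin m → ℝ), Pi.single i 1),
          ((0 : Fin d → Fin m → ℝ), Pi.single i 1)] = 0 := by
    intro i
    set v : (Fin d → Fin m → ℝ) × (Fin m → ℝ) := (0, Pi.single i 1) with hv
    have hℓv : ∀ i', ℓ i' v = 0 := by
      intro i'; rw [hℓ_apply]; simp [hv]
    have hPwv : ∀ i', Pw i' v = (Pi.single i 1 : Fin m → ℝ) i' := by
      intro i'; rw [hPw_apply]
    have hfv : ∀ q, fderiv ℝ G q v = σ (ℓ i q) := by
      intro q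
      rw [hfderivG q]
      simp only [ContinuousLinearMap.sum_apply, ContinuousLinearMap.add_apply,
        ContinuousLinearMap.smul_apply, smul_eq_mul]
      rw [Finset.sum_eq_single i]
      · rw [hℓv, hPwv]; simp
      · intro i' _ h; rw [hℓv, hPwv]; simp [Pi.single_apply, h]
      · intro h; exact absurd (Finset.mem_univ i) h
    rw [second_dir G hGsmooth p v]
    have hg : HasFDerivAt (fun q : (Fin d → Fin m → ℝ) × (Fin m → ℝ) => σ (ℓ i q))
        (deriv σ (ℓ i p) • ℓ i) p :=
      ((hσ1 (ℓ i p)).hasDerivAt).comp_hasFDerivAt p (ℓ i).hasFDerivAt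
    have : fderiv ℝ (fun q => fderiv ℝ G q v) p = deriv σ (ℓ i p) • ℓ i := by
      have hg' := hg.congr_of_eventuallyEq (Filter.Eventually.of_forall
        (fun q => hfv q))
      exact hg'.fderiv
    rw [this]
    simp [hℓv]
  rw [hFG]
  have hsum1 : (∑ j, ∑ i, iteratedFDeriv ℝ 2 G p
        ![(Pi.single j (Pi.single i 1), 0), (Pi.single j (Pi.single i 1), 0)])
      = (∑ j, x j ^ 2) * (∑ i, w i * deriv (deriv σ) (ℓ i p)) := by
    rw [Finset.sum_mul]
    apply Finset.sum_congr rfl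
    intro j _
    rw [Finset.mul_sum]
    apply Finset.sum_congr rfl
    intro i _
    rw [keyW j i]
    ring
  rw [hsum1]
  simp only [keyw, Finset.sum_const_zero, add_zero]
  -- final bound
  have ha : 0 ≤ a := le_trans (hσ'' 0).1 (hσ'' 0).2
  have hT0 : 0 ≤ ∑ j, x j ^ 2 := Finset.sum_nonneg fun j _ => sq_nonneg _
  have hr₁ : 0 ≤ r₁ := le_trans hT0 hx
  have hr₂ : 0 ≤ r₂ := le_trans (Finset.sum_nonneg fun i _ => abs_nonneg _) hw
  have hX : (∑ i, w i * deriv (deriv σ) (ℓ i p)) ≤ a * r₂ := by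
    calc (∑ i, w i * deriv (deriv σ) (ℓ i p)) ≤ ∑ i, |w i| * a := by
          apply Finset.sum_le_sum
          intro i _
          calc w i * deriv (deriv σ) (ℓ i p) ≤ |w i| * deriv (deriv σ) (ℓ i p) :=
                mul_le_mul_of_nonneg_right (le_abs_self _) (hσ'' _).1
            _ ≤ |w i| * a := mul_le_mul_of_nonneg_left (hσ'' _).2 (abs_nonneg _)
      _ = (∑ i, |w i|) * a := by rw [Finset.sum_mul]
      _ ≤ r₂ * a := mul_le_mul_of_nonneg_right hw ha
      _ = a * r₂ := mul_comm _ _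
  rcases le_or_gt 0 (∑ i, w i * deriv (deriv σ) (ℓ i p)) with hX0 | hX0
  · calc (∑ j, x j ^ 2) * (∑ i, w i * deriv (deriv σ) (ℓ i p))
        ≤ r₁ * (a * r₂) := mul_le_mul hx hX hX0 hr₁
      _ = a * r₁ * r₂ := by ring
  · calc (∑ j, x j ^ 2) * (∑ i, w i * deriv (deriv σ) (ℓ i p))
        ≤ 0 := mul_nonpos_of_nonneg_of_nonpos hT0 hX0.le
      _ ≤ a * r₁ * r₂ := by positivity
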